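/- Let f : ℝ → ℝ be C^{n+1} at a point x with f'(x) ≠ 0, and set v = 1/f'. Then for each n ≥ 1 there exists a polynomial Q_n in n−1 variables with integer coefficients and degree at most n, with Q_1 = 0, such that v^{(n)}(x) · (v(x))^{n-1} = - f^{(n+1)}(x) / (f'(x))^{n+1} + Q_n( f''(x)/(f'(x))², …, f^{(n)}(x)/(f'(x))^{n} ). -/

import Mathlib

open MvPolynomial Filter Topology

/-- Partial derivative decreases total degree by at least one. -/
lemma my_totalDegree_pderiv_le {σ : Type*} (i : σ) (p : MvPolynomial σ ℤ) :
    (MvPolynomial.pderiv i p).totalDegree ≤ p.totalDegree - 1 := by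
  classical
  conv_lhs => rw [p.as_sum]
  rw [map_sum]
  refine (MvPolynomial.totalDegree_finset_sum _ _).trans (Finset.sup_le fun s hs => ?_)
  rw [MvPolynomial.pderiv_monomial]
  by_cases h : s i = 0
  · simp [h]
  · refine (MvPolynomial.totalDegree_monomial_le _ _).trans ?_
    have hle : Finsupp.single i 1 ≤ s := by
      rw [Finsupp.single_le_iff]
      omega
    have hs' : s = s - Finsupp.single i 1 + Finsupp.single i 1 :=
      (tsub_add_cancel_of_le hle).symm
    have hsum : s.sum (fun _ e => e) =
        (s - Finsupp.single i 1).sum (fun _ e => e) + 1 := by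
      conv_lhs => rw [hs']
      rw [Finsupp.sum_add_index' (fun _ => rfl) (fun _ _ _ => rfl),
        Finsupp.sum_single_index rfl]
    have hmem := MvPolynomial.le_totalDegree hs
    show (s - Finsupp.single i 1).sum (fun _ e => e) ≤ _
    omega

/-- Chain rule for a multivariate polynomial composed with a curve. -/
lemma my_hasDerivAt_aeval {m : ℕ} (Q : MvPolynomial (Fin m) ℤ) (u : Fin m → ℝ → ℝ)
    (u' : Fin m → ℝ) (x : ℝ) (hu : ∀ k, HasDerivAt (u k) (u' k) x) :
    HasDerivAt (fun y => MvPolynomial.aeval (fun k => u k y) Q)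
      (∑ k, MvPolynomial.aeval (fun k => u k x) (MvPolynomial.pderiv k Q) * u' k) x := by
  induction Q using MvPolynomial.induction_on with
  | C a =>
    simp only [MvPolynomial.aeval_C, MvPolynomial.pderiv_C, map_zero, zero_mul,
      Finset.sum_const_zero]
    exact hasDerivAt_const x _
  | add p q hp hq =>
    simp only [map_add, add_mul, Finset.sum_add_distrib]
    exact hp.add hq
  | mul_X p k hp =>
    have h := hp.mul (hu k)
    rw [Pi.mul_def] at h
    simp only [map_mul, MvPolynomial.aeval_X]
    refine h.congr_deriv ?_; symm
    have : ∀ j : Fin m,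
        MvPolynomial.aeval (fun k => u k x) (MvPolynomial.pderiv j (p * X k)) * u' j =
        MvPolynomial.aeval (fun k => u k x) (MvPolynomial.pderiv j p) * u k x * u' j
          + (if j = k then MvPolynomial.aeval (fun k => u k x) p * u' j else 0) := by
      intro j
      rcases eq_or_ne j k with rfl | hne
      · simp [MvPolynomial.pderiv_mul]
        ring
      · rw [MvPolynomial.pderiv_mul, MvPolynomial.pderiv_X_of_ne (Ne.symm hne), if_neg hne]
        simp only [mul_zero, map_add, map_mul, MvPolynomial.aeval_X, add_zero]
    rw [Finset.sum_congr rfl fun j _ => this j, Finset.sum_add_distrib,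
      Finset.sum_ite_eq' Finset.univ k]
    simp only [Finset.mem_univ, if_true, Finset.sum_mul]
    congr 1
    exact Finset.sum_congr rfl fun j _ => by ring

lemma my_contDiffAt_deriv {m : ℕ} {f : ℝ → ℝ} {x : ℝ}
    (h : ContDiffAt ℝ (m + 1 : ℕ) f x) : ContDiffAt ℝ (m : ℕ) (deriv f) x := by
  obtain ⟨u, hu, hcd⟩ := h.contDiffOn le_rfl (by simp)
  obtain ⟨t, htu, ht, hxt⟩ := mem_nhds_iff.mp hu
  have h2 : ContDiffOn ℝ (m : ℕ) (deriv f) t :=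
    (hcd.mono htu).deriv_of_isOpen ht (by exact_mod_cast le_rfl)
  exact h2.contDiffAt (ht.mem_nhds hxt)

lemma my_contDiffAt_iteratedDeriv {j k : ℕ} {f : ℝ → ℝ} {x : ℝ}
    (h : ContDiffAt ℝ (k + j : ℕ) f x) : ContDiffAt ℝ (k : ℕ) (iteratedDeriv j f) x := by
  induction j generalizing f with
  | zero => simpa using h
  | succ j ih =>
    rw [iteratedDeriv_succ']
    refine ih (my_contDiffAt_deriv ?_)
    exact (by exact_mod_cast h : ContDiffAt ℝ ((k + j) + 1 : ℕ) f x)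

lemma my_hasDerivAt_iteratedDeriv {j : ℕ} {f : ℝ → ℝ} {x : ℝ}
    (h : ContDiffAt ℝ (j + 1 : ℕ) f x) :
    HasDerivAt (iteratedDeriv j f) (iteratedDeriv (j + 1) f x) x := by
  have h1 : ContDiffAt ℝ (1 : ℕ) (iteratedDeriv j f) x :=
    my_contDiffAt_iteratedDeriv (by rw [Nat.add_comm]; exact h : ContDiffAt ℝ (1 + j : ℕ) f x)
  have h2 := (h1.differentiableAt (by norm_num)).hasDerivAt
  rw [iteratedDeriv_succ]
  exact h2

lemma my_nat_mul_pow_pred (c : ℝ) (m : ℕ) : (m : ℝ) * c ^ (m - 1) * c = m * c ^ m := by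
  cases m with
  | zero => simp
  | succ k => simp [pow_succ]; ring

lemma my_hasDerivAt_U {f : ℝ → ℝ} {x : ℝ} (j n : ℕ) (hf : ContDiffAt ℝ (n : ℕ) f x)
    (hj : j + 3 ≤ n) (hf' : deriv f x ≠ 0) :
    HasDerivAt (fun y => iteratedDeriv (j + 2) f y / (deriv f y) ^ (j + 2))
      (deriv f x * (iteratedDeriv (j + 3) f x / (deriv f x) ^ (j + 3)
        - ((j : ℝ) + 2) * (iteratedDeriv 2 f x / (deriv f x) ^ 2)
            * (iteratedDeriv (j + 2) f x / (deriv f x) ^ (j + 2)))) x := by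
  have hA : HasDerivAt (iteratedDeriv (j + 2) f) (iteratedDeriv (j + 3) f x) x :=
    my_hasDerivAt_iteratedDeriv (h := hf.of_le (by exact_mod_cast hj))
  have hB : HasDerivAt (deriv f) (iteratedDeriv 2 f x) x := by
    have h2 : ContDiffAt ℝ (2 : ℕ) f x := hf.of_le (by exact_mod_cast by omega)
    have := my_hasDerivAt_iteratedDeriv (j := 1) (h := h2)
    rwa [iteratedDeriv_one] at this
  have hBp : HasDerivAt (fun y => (deriv f y) ^ (j + 2))
      (((j : ℝ) + 2) * (deriv f x) ^ (j + 1) * iteratedDeriv 2 f x) x := by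
    have := hB.pow (j + 2)
    rw [Pi.pow_def] at this
    norm_num at this ⊢
    convert this using 2
  have hdiv := hA.div hBp (pow_ne_zero _ hf')
  refine hdiv.congr_deriv ?_
  have hB2 : deriv f x ≠ 0 := hf'
  field_simp
  ring

theorem my_deg (m : ℕ) (Q : MvPolynomial (Fin m) ℤ) (hdeg : Q.totalDegree ≤ m + 1) :
    (MvPolynomial.C 2 * MvPolynomial.X 0 * MvPolynomial.X (Fin.last m)
        + MvPolynomial.C (m : ℤ) * MvPolynomial.X 0 *
            MvPolynomial.rename Fin.castSucc Q
        + ∑ k : Fin m, MvPolynomial.rename Fin.castSucc (MvPolynomial.pderiv k Q) *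
            (MvPolynomial.X k.succ
              - MvPolynomial.C ((k.1 : ℤ) + 2) * MvPolynomial.X 0 *
                MvPolynomial.X k.castSucc)).totalDegree ≤ m + 2 := by
  refine (MvPolynomial.totalDegree_add _ _).trans
    (max_le ((MvPolynomial.totalDegree_add _ _).trans (max_le ?_ ?_)) ?_)
  · refine (MvPolynomial.totalDegree_mul _ _).trans ?_
    have h1 := MvPolynomial.totalDegree_mul (MvPolynomial.C 2 : MvPolynomial (Fin (m+1)) ℤ)
      (MvPolynomial.X 0)
    have h2 := MvPolynomial.totalDegree_X (R := ℤ) (Fin.last m)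
    have h3 := MvPolynomial.totalDegree_X (R := ℤ) (0 : Fin (m + 1))
    have h4 := MvPolynomial.totalDegree_C (σ := Fin (m+1)) (2 : ℤ)
    omega
  · refine (MvPolynomial.totalDegree_mul _ _).trans ?_
    have h1 := MvPolynomial.totalDegree_mul (MvPolynomial.C (m : ℤ) : MvPolynomial (Fin (m+1)) ℤ)
      (MvPolynomial.X 0)
    have h3 := MvPolynomial.totalDegree_X (R := ℤ) (0 : Fin (m + 1))
    have h4 := MvPolynomial.totalDegree_C (σ := Fin (m+1)) ((m : ℤ))
    have h5 := MvPolynomial.totalDegree_rename_le (Fin.castSucc) Q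
    omega
  · refine (MvPolynomial.totalDegree_finset_sum _ _).trans (Finset.sup_le fun k _ => ?_)
    refine (MvPolynomial.totalDegree_mul _ _).trans ?_
    have h1 := (MvPolynomial.totalDegree_rename_le (Fin.castSucc)
      (MvPolynomial.pderiv k Q)).trans (my_totalDegree_pderiv_le k Q)
    have h2 := MvPolynomial.totalDegree_sub (MvPolynomial.X k.succ : MvPolynomial (Fin (m+1)) ℤ)
      (MvPolynomial.C ((k.1 : ℤ) + 2) * MvPolynomial.X 0 * MvPolynomial.X k.castSucc)
    have h3 := MvPolynomial.totalDegree_X (R := ℤ) (k.succ)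
    have h4 := MvPolynomial.totalDegree_mul
      (MvPolynomial.C ((k.1 : ℤ) + 2) * MvPolynomial.X 0 : MvPolynomial (Fin (m+1)) ℤ)
      (MvPolynomial.X k.castSucc)
    have h5 := MvPolynomial.totalDegree_mul
      (MvPolynomial.C ((k.1 : ℤ) + 2) : MvPolynomial (Fin (m+1)) ℤ) (MvPolynomial.X 0)
    have h6 := MvPolynomial.totalDegree_X (R := ℤ) (0 : Fin (m+1))
    have h7 := MvPolynomial.totalDegree_X (R := ℤ) (k.castSucc)
    have h8 := MvPolynomial.totalDegree_C (σ := Fin (m+1)) ((k.1 : ℤ) + 2)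
    have := max_le_iff.mp (le_refl (max (MvPolynomial.X k.succ : MvPolynomial (Fin (m+1)) ℤ).totalDegree (MvPolynomial.C ((k.1 : ℤ) + 2) * MvPolynomial.X 0 * MvPolynomial.X k.castSucc).totalDegree))
    omega

lemma my_eval_Qnew (m : ℕ) (Q : MvPolynomial (Fin m) ℤ) (U : ℕ → ℝ) :
    MvPolynomial.aeval (fun k : Fin (m + 1) => U k.1)
      (MvPolynomial.C 2 * MvPolynomial.X 0 * MvPolynomial.X (Fin.last m)
        + MvPolynomial.C (m : ℤ) * MvPolynomial.X 0 *
            MvPolynomial.rename Fin.castSucc Q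
        + ∑ k : Fin m, MvPolynomial.rename Fin.castSucc (MvPolynomial.pderiv k Q) *
            (MvPolynomial.X k.succ
              - MvPolynomial.C ((k.1 : ℤ) + 2) * MvPolynomial.X 0 *
                MvPolynomial.X k.castSucc)) =
      2 * U 0 * U m + (m : ℝ) * U 0 * MvPolynomial.aeval (fun k : Fin m => U k.1) Q
      + ∑ k : Fin m,
          MvPolynomial.aeval (fun k : Fin m => U k.1) (MvPolynomial.pderiv k Q) *
            (U (k.1 + 1) - ((k.1 : ℝ) + 2) * U 0 * U k.1) := by
  simp only [map_add, map_mul, map_sum, map_sub, MvPolynomial.aeval_X, MvPolynomial.aeval_C,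
    MvPolynomial.aeval_rename, Function.comp_def, Fin.coe_castSucc, Fin.val_succ,
    Fin.val_last, Fin.val_zero]
  norm_num

theorem my_aux (m : ℕ) : ∃ Q : MvPolynomial (Fin m) ℤ, Q.totalDegree ≤ m + 1 ∧
    (m = 0 → Q = 0) ∧
    ∀ (f : ℝ → ℝ) (x : ℝ), ContDiffAt ℝ (m + 2 : ℕ) f x → deriv f x ≠ 0 →
      iteratedDeriv (m + 1) (fun y => 1 / deriv f y) x * (1 / deriv f x) ^ m =
        - iteratedDeriv (m + 2) f x / (deriv f x) ^ (m + 2) +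
          MvPolynomial.aeval
            (fun k : Fin m => iteratedDeriv (k.1 + 2) f x / (deriv f x) ^ (k.1 + 2)) Q := by
  induction m with
  | zero =>
    refine ⟨0, by simp, fun _ => rfl, fun f x hf hf' => ?_⟩
    have hd : HasDerivAt (deriv f) (iteratedDeriv 2 f x) x := by
      have := my_hasDerivAt_iteratedDeriv (j := 1) (f := f) (x := x)
        (hf.of_le (by norm_cast))
      rwa [iteratedDeriv_one] at this
    have hv : HasDerivAt (fun y => 1 / deriv f y)
        (-(iteratedDeriv 2 f x) / (deriv f x) ^ 2) x := by
      simpa [one_div, Pi.inv_def] using hd.inv hf'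
    rw [show (0 + 1 : ℕ) = 1 from rfl, iteratedDeriv_one]
    simp only [pow_zero, mul_one, map_zero, add_zero, hv.deriv]
  | succ m IH =>
    obtain ⟨Q, hdeg, hQ0, hId⟩ := IH
    classical
    refine ⟨MvPolynomial.C 2 * MvPolynomial.X 0 * MvPolynomial.X (Fin.last m)
        + MvPolynomial.C (m : ℤ) * MvPolynomial.X 0 *
            MvPolynomial.rename Fin.castSucc Q
        + ∑ k : Fin m, MvPolynomial.rename Fin.castSucc (MvPolynomial.pderiv k Q) *
            (MvPolynomial.X k.succ
              - MvPolynomial.C ((k.1 : ℤ) + 2) * MvPolynomial.X 0 *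
                MvPolynomial.X k.castSucc),
      my_deg m Q hdeg, by simp, ?_⟩
    intro f x hf hf'
    rw [show m + 1 + 1 = m + 2 from rfl, show m + 1 + 2 = m + 3 from rfl]
    -- abbreviations
    set v : ℝ → ℝ := fun y => 1 / deriv f y with hv_def
    have hf3 : ContDiffAt ℝ (m + 3 : ℕ) f x := hf
    -- eventual identity
    have hev1 : ∀ᶠ y in 𝓝 x, ContDiffAt ℝ (m + 3 : ℕ) f y := hf3.eventually (by rw [← WithTop.coe_natCast]; exact fun h => WithTop.natCast_ne_top (m+3) (WithTop.coe_inj.mp h))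
    have hcF' : ContDiffAt ℝ (m + 2 : ℕ) (deriv f) x := my_contDiffAt_deriv hf3
    have hev2 : ∀ᶠ y in 𝓝 x, deriv f y ≠ 0 := hcF'.continuousAt.eventually_ne hf'
    have hev : (fun y => iteratedDeriv (m + 1) v y * (v y) ^ m) =ᶠ[𝓝 x]
        (fun y => - iteratedDeriv (m + 2) f y / (deriv f y) ^ (m + 2) +
          MvPolynomial.aeval
            (fun k : Fin m => iteratedDeriv (k.1 + 2) f y / (deriv f y) ^ (k.1 + 2)) Q) :=
      (hev1.and hev2).mono fun y ⟨h1, h2⟩ =>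
        hId f y (h1.of_le (by exact_mod_cast Nat.le_succ (m + 2))) h2
    -- differentiability ingredients
    have hB : HasDerivAt (deriv f) (iteratedDeriv 2 f x) x := by
      have := my_hasDerivAt_iteratedDeriv (j := 1) (f := f) (x := x)
        (hf3.of_le (by exact_mod_cast by omega))
      rwa [iteratedDeriv_one] at this
    have hdv : HasDerivAt v (-(iteratedDeriv 2 f x / (deriv f x) ^ 2)) x := by
      simp only [hv_def, one_div, ← neg_div]
      exact hB.inv hf'
    have hvc : ContDiffAt ℝ (m + 2 : ℕ) v x := by
      have := hcF'.inv hf'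
      simp only [hv_def, one_div]
      exact this
    have hit : HasDerivAt (iteratedDeriv (m + 1) v) (iteratedDeriv (m + 2) v x) x :=
      my_hasDerivAt_iteratedDeriv (hvc.of_le (by norm_cast))
    have hpow : HasDerivAt (fun y => (v y) ^ m)
        ((m : ℝ) * (v x) ^ (m - 1) * (-(iteratedDeriv 2 f x / (deriv f x) ^ 2))) x :=
      hdv.pow m
    -- derivative of LHS
    have h1 : deriv (fun y => iteratedDeriv (m + 1) v y * (v y) ^ m) x =
        iteratedDeriv (m + 2) v x * (v x) ^ m +
          iteratedDeriv (m + 1) v x *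
            ((m : ℝ) * (v x) ^ (m - 1) * (-(iteratedDeriv 2 f x / (deriv f x) ^ 2))) :=
      (hit.mul hpow).deriv
    -- derivative of RHS
    have hUder : ∀ k : Fin m,
        HasDerivAt (fun y => iteratedDeriv (k.1 + 2) f y / (deriv f y) ^ (k.1 + 2))
          (deriv f x * (iteratedDeriv (k.1 + 3) f x / (deriv f x) ^ (k.1 + 3)
            - ((k.1 : ℝ) + 2) * (iteratedDeriv 2 f x / (deriv f x) ^ 2)
                * (iteratedDeriv (k.1 + 2) f x / (deriv f x) ^ (k.1 + 2)))) x :=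
      fun k => my_hasDerivAt_U k.1 (m + 3) hf3 (by omega) hf'
    have hneg : HasDerivAt (fun y => - iteratedDeriv (m + 2) f y / (deriv f y) ^ (m + 2))
        (-(deriv f x * (iteratedDeriv (m + 3) f x / (deriv f x) ^ (m + 3)
            - ((m : ℝ) + 2) * (iteratedDeriv 2 f x / (deriv f x) ^ 2)
                * (iteratedDeriv (m + 2) f x / (deriv f x) ^ (m + 2))))) x := by
      simp only [neg_div]
      exact (my_hasDerivAt_U m (m + 3) hf3 (by omega) hf').neg
    have haev : HasDerivAt (fun y => MvPolynomial.aeval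
          (fun k : Fin m => iteratedDeriv (k.1 + 2) f y / (deriv f y) ^ (k.1 + 2)) Q)
        (∑ k : Fin m, MvPolynomial.aeval
            (fun k : Fin m => iteratedDeriv (k.1 + 2) f x / (deriv f x) ^ (k.1 + 2))
            (MvPolynomial.pderiv k Q) *
          (deriv f x * (iteratedDeriv (k.1 + 3) f x / (deriv f x) ^ (k.1 + 3)
            - ((k.1 : ℝ) + 2) * (iteratedDeriv 2 f x / (deriv f x) ^ 2)
                * (iteratedDeriv (k.1 + 2) f x / (deriv f x) ^ (k.1 + 2))))) x :=
      my_hasDerivAt_aeval Q _ _ x hUder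
    have h2 : deriv (fun y => - iteratedDeriv (m + 2) f y / (deriv f y) ^ (m + 2) +
          MvPolynomial.aeval
            (fun k : Fin m => iteratedDeriv (k.1 + 2) f y / (deriv f y) ^ (k.1 + 2)) Q) x =
        (-(deriv f x * (iteratedDeriv (m + 3) f x / (deriv f x) ^ (m + 3)
            - ((m : ℝ) + 2) * (iteratedDeriv 2 f x / (deriv f x) ^ 2)
                * (iteratedDeriv (m + 2) f x / (deriv f x) ^ (m + 2))))) +
        (∑ k : Fin m, MvPolynomial.aeval
            (fun k : Fin m => iteratedDeriv (k.1 + 2) f x / (deriv f x) ^ (k.1 + 2))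
            (MvPolynomial.pderiv k Q) *
          (deriv f x * (iteratedDeriv (k.1 + 3) f x / (deriv f x) ^ (k.1 + 3)
            - ((k.1 : ℝ) + 2) * (iteratedDeriv 2 f x / (deriv f x) ^ 2)
                * (iteratedDeriv (k.1 + 2) f x / (deriv f x) ^ (k.1 + 2))))) :=
      (hneg.add haev).deriv
    have hkey := hev.deriv_eq
    rw [h1, h2] at hkey
    -- the identity at x itself
    have hIdx := hId f x (hf3.of_le (by exact_mod_cast Nat.le_succ (m + 2))) hf'
    -- evaluate the new polynomial
    have heval : MvPolynomial.aeval
        (fun k : Fin (m + 1) => iteratedDeriv (k.1 + 2) f x / (deriv f x) ^ (k.1 + 2))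
        (MvPolynomial.C 2 * MvPolynomial.X 0 * MvPolynomial.X (Fin.last m)
          + MvPolynomial.C (m : ℤ) * MvPolynomial.X 0 *
              MvPolynomial.rename Fin.castSucc Q
          + ∑ k : Fin m, MvPolynomial.rename Fin.castSucc (MvPolynomial.pderiv k Q) *
              (MvPolynomial.X k.succ
                - MvPolynomial.C ((k.1 : ℤ) + 2) * MvPolynomial.X 0 *
                  MvPolynomial.X k.castSucc)) =
        2 * (iteratedDeriv 2 f x / (deriv f x) ^ 2)
            * (iteratedDeriv (m + 2) f x / (deriv f x) ^ (m + 2))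
        + (m : ℝ) * (iteratedDeriv 2 f x / (deriv f x) ^ 2) *
            MvPolynomial.aeval
              (fun k : Fin m => iteratedDeriv (k.1 + 2) f x / (deriv f x) ^ (k.1 + 2)) Q
        + ∑ k : Fin m,
            MvPolynomial.aeval
              (fun k : Fin m => iteratedDeriv (k.1 + 2) f x / (deriv f x) ^ (k.1 + 2))
              (MvPolynomial.pderiv k Q) *
              (iteratedDeriv (k.1 + 3) f x / (deriv f x) ^ (k.1 + 3)
                - ((k.1 : ℝ) + 2) * (iteratedDeriv 2 f x / (deriv f x) ^ 2)
                    * (iteratedDeriv (k.1 + 2) f x / (deriv f x) ^ (k.1 + 2))) :=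
      my_eval_Qnew m Q (fun j => iteratedDeriv (j + 2) f x / (deriv f x) ^ (j + 2))
    rw [heval]
    -- rewrite the sum on the RHS of hkey as B * S
    have hS : (∑ k : Fin m, MvPolynomial.aeval
            (fun k : Fin m => iteratedDeriv (k.1 + 2) f x / (deriv f x) ^ (k.1 + 2))
            (MvPolynomial.pderiv k Q) *
          (deriv f x * (iteratedDeriv (k.1 + 3) f x / (deriv f x) ^ (k.1 + 3)
            - ((k.1 : ℝ) + 2) * (iteratedDeriv 2 f x / (deriv f x) ^ 2)
                * (iteratedDeriv (k.1 + 2) f x / (deriv f x) ^ (k.1 + 2))))) =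
        deriv f x * ∑ k : Fin m,
            MvPolynomial.aeval
              (fun k : Fin m => iteratedDeriv (k.1 + 2) f x / (deriv f x) ^ (k.1 + 2))
              (MvPolynomial.pderiv k Q) *
              (iteratedDeriv (k.1 + 3) f x / (deriv f x) ^ (k.1 + 3)
                - ((k.1 : ℝ) + 2) * (iteratedDeriv 2 f x / (deriv f x) ^ 2)
                    * (iteratedDeriv (k.1 + 2) f x / (deriv f x) ^ (k.1 + 2))) := by
      rw [Finset.mul_sum]
      exact Finset.sum_congr rfl fun k _ => by ring
    rw [hS] at hkey
    simp only [hv_def] at hkey hIdx ⊢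
    have hq : ∀ k : ℕ, ((1 : ℝ) / deriv f x) ^ k * (deriv f x) ^ k = 1 := fun k => by
      rw [one_div, inv_pow, inv_mul_cancel₀ (pow_ne_zero _ hf')]
    have hw2' := eq_sub_of_add_eq hkey
    obtain rfl | ⟨mm, rfl⟩ : m = 0 ∨ ∃ mm, m = mm + 1 := by
      cases m with
      | zero => exact Or.inl rfl
      | succ k => exact Or.inr ⟨k, rfl⟩
    · norm_num at hw2' hIdx ⊢
      rw [hw2']
      field_simp
      ring
    · simp only [Nat.add_sub_cancel] at hw2'
      have hw1 : iteratedDeriv (mm + 1 + 1) (fun y => 1 / deriv f y) x =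
          (- iteratedDeriv (mm + 1 + 2) f x / (deriv f x) ^ (mm + 1 + 2) +
            MvPolynomial.aeval
              (fun k : Fin (mm + 1) =>
                iteratedDeriv (k.1 + 2) f x / (deriv f x) ^ (k.1 + 2)) Q) *
            (deriv f x) ^ (mm + 1) := by
        rw [← hIdx, mul_assoc, hq (mm + 1), mul_one]
      rw [pow_succ, ← mul_assoc, hw2', hw1]
      set S := ∑ k : Fin (mm + 1), (MvPolynomial.aeval (fun k : Fin (mm + 1) => iteratedDeriv (k.1 + 2) f x / (deriv f x) ^ (k.1 + 2)) (MvPolynomial.pderiv k Q)) * (iteratedDeriv (k.1 + 3) f x / deriv f x ^ (k.1 + 3) - ((k.1 : ℝ) + 2) * (iteratedDeriv 2 f x / deriv f x ^ 2) * (iteratedDeriv (k.1 + 2) f x / deriv f x ^ (k.1 + 2))) with hS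
      set A := MvPolynomial.aeval (fun k : Fin (mm + 1) => iteratedDeriv (k.1 + 2) f x / (deriv f x) ^ (k.1 + 2)) Q with hA
      have hdm : deriv f x ^ mm * (deriv f x)⁻¹ ^ mm = 1 := by
        rw [← mul_pow, mul_inv_cancel₀ hf', one_pow]
      field_simp
      linear_combination (deriv f x ^ (mm + 1 + 3) * ((mm + 1 : ℕ) : ℝ) * iteratedDeriv 2 f x * deriv f x * (-iteratedDeriv (mm + 1 + 2) f x + deriv f x ^ (mm + 1 + 2) * A)) * hq mm

/-- If `f` has continuous derivatives up to order `n+1` at `x`, `f' x ≠ 0`, and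
`v = 1 / f'`, then there is an integer polynomial `Q_n` in `n-1` variables of
total degree at most `n`, with `Q_1 = 0`, such that
`v^{(n)}(x) (v x)^{n-1} = - f^{(n+1)}(x)/(f'(x))^{n+1} + Q_n(f''/(f')², …, f^{(n)}/(f')ⁿ)`. -/
theorem stmt_2 (n : ℕ) (hn : 1 ≤ n) (f : ℝ → ℝ) (x : ℝ)
    (hf : ContDiffAt ℝ (n + 1) f x) (hf' : deriv f x ≠ 0)
    (v : ℝ → ℝ) (hv : v = fun y => 1 / deriv f y) :
    ∃ Q : MvPolynomial (Fin (n - 1)) ℤ,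
      Q.totalDegree ≤ n ∧ (n = 1 → Q = 0) ∧
      iteratedDeriv n v x * (v x) ^ (n - 1) =
        - iteratedDeriv (n + 1) f x / (deriv f x) ^ (n + 1) +
          MvPolynomial.aeval
            (fun k : Fin (n - 1) =>
              iteratedDeriv (k.1 + 2) f x / (deriv f x) ^ (k.1 + 2)) Q := by
  subst hv
  obtain ⟨m, rfl⟩ : ∃ m, n = m + 1 := ⟨n - 1, (Nat.succ_pred_eq_of_pos hn).symm⟩
  obtain ⟨Q, hdeg, hQ0, hId⟩ := my_aux m
  refine ⟨Q, hdeg, fun h => hQ0 (by omega), ?_⟩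
  have hf2 : ContDiffAt ℝ ((m + 2 : ℕ) : WithTop ℕ∞) f x := by
    exact_mod_cast hf
  exact hId f x hf2 hf'
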